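/- Let f be a measurable non-negative function on (0,∞)×(0,T), K a non-negative measurable symmetric kernel on (0,∞)², and φ : (0,∞) → ℝ bounded measurable. If (ς,ϱ,s) ↦ K(ς,ϱ)f(ς,s)f(ϱ,s) is integrable on (0,∞)²×(0,T), then ∫₀^τ ∫₀^∞ ∫₀^ς φ̃(ς,ϱ) K(ς,ϱ) f(ς,s) f(ϱ,s) dϱ dς ds = ∫₀^∞ φ(ς) [ ∫₀^τ ∫₀^∞ K(ς+ϱ,ϱ) f(ς+ϱ,s) f(ϱ,s) dϱ ds − ∫₀^τ ∫₀^∞ K(ς,ϱ) f(ς,s) f(ϱ,s) dϱ ds ] dς, where φ̃(ς,ϱ) = φ(ς−ϱ) − φ(ς) − φ(ϱ). -/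

import Mathlib

open MeasureTheory Set

namespace Stmt8Aux

/-- the open triangle `{0 < ϱ < ς}` (coordinates `(ς, ϱ)`). -/
def T2 : Set (ℝ × ℝ) := {q | 0 < q.2 ∧ q.2 < q.1}

/-- the reflected triangle `{0 < ς < ϱ}`. -/
def T2' : Set (ℝ × ℝ) := {q | 0 < q.1 ∧ q.1 < q.2}

lemma T2_meas : MeasurableSet T2 :=
  (measurableSet_lt measurable_const measurable_snd).inter
    (measurableSet_lt measurable_snd measurable_fst)

lemma T2'_meas : MeasurableSet T2' :=
  (measurableSet_lt measurable_const measurable_fst).inter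
    (measurableSet_lt measurable_fst measurable_snd)

/-- the shear `(x, y) ↦ (x + y, y)` as a measurable equivalence. -/
def shearE : (ℝ × ℝ) ≃ᵐ (ℝ × ℝ) where
  toEquiv :=
    { toFun := fun p => (p.1 + p.2, p.2)
      invFun := fun p => (p.1 - p.2, p.2)
      left_inv := fun p => by simp
      right_inv := fun p => by simp }
  measurable_toFun := (measurable_fst.add measurable_snd).prodMk measurable_snd
  measurable_invFun := (measurable_fst.sub measurable_snd).prodMk measurable_snd

lemma shearE_mp : MeasurePreserving shearE volume volume := by
  rw [Measure.volume_eq_prod]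
  exact measurePreserving_add_prod volume volume

lemma transferIOn {X Y : Type*} [MeasurableSpace X] [MeasurableSpace Y] {μ : Measure X}
    {ν : Measure Y} (e : X ≃ᵐ Y) (he : MeasurePreserving e μ ν) {g : Y → ℝ} {S : Set Y}
    (hg : IntegrableOn g S ν) : IntegrableOn (fun x => g (e x)) (e ⁻¹' S) μ :=
  ((he.restrict_preimage_emb e.measurableEmbedding S).integrable_comp_emb
    e.measurableEmbedding).2 hg

lemma setIntegral_prod_symm_vol {α β : Type*} [MeasureSpace α] [MeasureSpace β]
    [SigmaFinite (volume : Measure α)] [SigmaFinite (volume : Measure β)]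
    (f : α × β → ℝ) {s : Set α} {t : Set β} (hf : IntegrableOn f (s ×ˢ t)) :
    ∫ z in s ×ˢ t, f z = ∫ y in t, ∫ x in s, f (x, y) := by
  rw [Measure.volume_eq_prod] at hf ⊢
  simp only [← Measure.prod_restrict, IntegrableOn] at hf ⊢
  exact integral_prod_symm f hf

/-- unfolding a set integral over the triangle into an iterated integral. -/
lemma triangle_unfold (h : ℝ × ℝ → ℝ) (hint : IntegrableOn h T2 volume) :
    ∫ q in T2, h q = ∫ ς in Ioi (0:ℝ), ∫ ϱ in Ioo 0 ς, h (ς, ϱ) := by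
  rw [← integral_indicator T2_meas]
  rw [Measure.volume_eq_prod] at hint ⊢
  rw [integral_prod _ ((integrable_indicator_iff T2_meas).2 hint)]
  have hslice : ∀ ς, (∫ ϱ, T2.indicator h (ς, ϱ)) = ∫ ϱ in Ioo 0 ς, h (ς, ϱ) := by
    intro ς
    have hfun : (fun ϱ => T2.indicator h (ς, ϱ)) = (Ioo 0 ς).indicator fun ϱ => h (ς, ϱ) := by
      funext ϱ
      by_cases hϱ : ϱ ∈ Ioo 0 ς
      · rw [Set.indicator_of_mem hϱ,
          Set.indicator_of_mem (show ((ς, ϱ) : ℝ × ℝ) ∈ T2 from ⟨hϱ.1, hϱ.2⟩)]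
      · rw [Set.indicator_of_notMem hϱ, Set.indicator_of_notMem (by
          simpa [T2, Set.mem_Ioo] using hϱ)]
    rw [hfun, integral_indicator measurableSet_Ioo]
  simp_rw [hslice]
  refine (setIntegral_eq_integral_of_forall_compl_eq_zero fun ς hς => ?_).symm
  rw [Set.Ioo_eq_empty (by simpa using hς), Measure.restrict_empty, integral_zero_measure]

/-- unfolding the quadrant integral against `φ` into the iterated form appearing on the
right-hand side, together with integrability of the resulting integrand. -/
lemma rhs_unfold (τ : ℝ) (H : ℝ × ℝ × ℝ → ℝ) (φ : ℝ → ℝ) (hφm : Measurable φ)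
    (hφb : ∃ C, ∀ ς, |φ ς| ≤ C)
    (hH : IntegrableOn H (Ioi 0 ×ˢ Ioi 0 ×ˢ Ioc 0 τ) volume) :
    (∫ p in Ioi (0:ℝ) ×ˢ Ioi (0:ℝ) ×ˢ Ioc (0:ℝ) τ, φ p.1 * H p)
      = (∫ ς in Ioi (0:ℝ), φ ς * ∫ s in Ioc (0:ℝ) τ, ∫ ϱ in Ioi (0:ℝ), H (ς, ϱ, s))
    ∧ Integrable (fun ς => φ ς * ∫ s in Ioc (0:ℝ) τ, ∫ ϱ in Ioi (0:ℝ), H (ς, ϱ, s))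
        (volume.restrict (Ioi 0)) := by
  obtain ⟨C, hC⟩ := hφb
  have hφH : IntegrableOn (fun p : ℝ × ℝ × ℝ => φ p.1 * H p)
      (Ioi 0 ×ˢ Ioi 0 ×ˢ Ioc 0 τ) volume :=
    hH.bdd_mul (hφm.comp measurable_fst).aestronglyMeasurable
      (ae_of_all _ fun p => by simpa [Real.norm_eq_abs] using hC p.1)
  have hmeq : (volume : Measure (ℝ × ℝ × ℝ)).restrict (Ioi 0 ×ˢ Ioi 0 ×ˢ Ioc 0 τ)
      = ((volume : Measure ℝ).restrict (Ioi 0)).prod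
        ((volume : Measure (ℝ × ℝ)).restrict (Ioi 0 ×ˢ Ioc 0 τ)) := by
    rw [Measure.prod_restrict, ← Measure.volume_eq_prod]
  have hInt2 : Integrable (fun p : ℝ × ℝ × ℝ => φ p.1 * H p)
      (((volume : Measure ℝ).restrict (Ioi 0)).prod
        ((volume : Measure (ℝ × ℝ)).restrict (Ioi 0 ×ˢ Ioc 0 τ))) := by
    rw [← hmeq]; exact hφH
  have hIntH : Integrable H
      (((volume : Measure ℝ).restrict (Ioi 0)).prod
        ((volume : Measure (ℝ × ℝ)).restrict (Ioi 0 ×ˢ Ioc 0 τ))) := by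
    rw [← hmeq]; exact hH
  have hae : ∀ᵐ ς ∂(volume : Measure ℝ).restrict (Ioi 0),
      (∫ y, H (ς, y) ∂((volume : Measure (ℝ × ℝ)).restrict (Ioi 0 ×ˢ Ioc 0 τ)))
        = ∫ s in Ioc (0:ℝ) τ, ∫ ϱ in Ioi (0:ℝ), H (ς, ϱ, s) := by
    filter_upwards [hIntH.prod_right_ae] with ς hς
    exact setIntegral_prod_symm_vol (fun y : ℝ × ℝ => H (ς, y)) hς
  constructor
  · have h1 : (∫ p in Ioi (0:ℝ) ×ˢ Ioi (0:ℝ) ×ˢ Ioc (0:ℝ) τ, φ p.1 * H p)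
        = ∫ ς, φ ς * ∫ y, H (ς, y)
            ∂((volume : Measure (ℝ × ℝ)).restrict (Ioi 0 ×ˢ Ioc 0 τ))
            ∂((volume : Measure ℝ).restrict (Ioi 0)) := by
      rw [show (∫ p in Ioi (0:ℝ) ×ˢ Ioi (0:ℝ) ×ˢ Ioc (0:ℝ) τ, φ p.1 * H p)
          = ∫ p, φ p.1 * H p
              ∂(((volume : Measure ℝ).restrict (Ioi 0)).prod
                ((volume : Measure (ℝ × ℝ)).restrict (Ioi 0 ×ˢ Ioc 0 τ))) from by
        rw [← hmeq]]
      rw [integral_prod _ hInt2]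
      simp_rw [integral_const_mul]
    rw [h1]
    exact integral_congr_ae (by filter_upwards [hae] with ς h using by rw [h])
  · have hI0 : Integrable (fun ς => ∫ y, φ ς * H (ς, y)
        ∂((volume : Measure (ℝ × ℝ)).restrict (Ioi 0 ×ˢ Ioc 0 τ)))
        ((volume : Measure ℝ).restrict (Ioi 0)) := hInt2.integral_prod_left
    simp_rw [integral_const_mul] at hI0
    exact hI0.congr (by filter_upwards [hae] with ς h using by rw [h])

end Stmt8Aux

open Stmt8Aux

/-- Weak (moment) formulation identity for the RBK coagulation operator: integrating the
collision operator against a bounded test function `φ` gives the triangular integral with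
weight `φ̃(ς,ϱ) = φ(ς−ϱ) − φ(ς) − φ(ϱ)`. -/
theorem stmt_8 (T τ : ℝ) (hτ : 0 < τ) (hτT : τ ≤ T)
    (f : ℝ → ℝ → ℝ) (hf : Measurable (Function.uncurry f)) (hfnn : ∀ ς s, 0 ≤ f ς s)
    (K : ℝ → ℝ → ℝ) (hKm : Measurable (Function.uncurry K))
    (hKnn : ∀ ς ϱ, 0 ≤ K ς ϱ) (hKsym : ∀ ς ϱ, K ς ϱ = K ϱ ς)
    (φ : ℝ → ℝ) (hφm : Measurable φ) (hφb : ∃ C, ∀ ς, |φ ς| ≤ C)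
    (hint : IntegrableOn (fun p : ℝ × ℝ × ℝ => K p.1 p.2.1 * f p.1 p.2.2 * f p.2.1 p.2.2)
      (Set.Ioi 0 ×ˢ Set.Ioi 0 ×ˢ Set.Ioo 0 T)) :
    ∫ s in Set.Ioc (0:ℝ) τ, ∫ ς in Set.Ioi (0:ℝ), ∫ ϱ in Set.Ioo 0 ς,
        (φ (ς - ϱ) - φ ς - φ ϱ) * (K ς ϱ * f ς s * f ϱ s)
      = ∫ ς in Set.Ioi (0:ℝ), φ ς *
          ((∫ s in Set.Ioc (0:ℝ) τ, ∫ ϱ in Set.Ioi (0:ℝ),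
              K (ς + ϱ) ϱ * f (ς + ϱ) s * f ϱ s)
            - ∫ s in Set.Ioc (0:ℝ) τ, ∫ ϱ in Set.Ioi (0:ℝ), K ς ϱ * f ς s * f ϱ s) := by
  obtain ⟨C, hC⟩ := hφb
  set G : ℝ × ℝ × ℝ → ℝ := fun p => K p.1 p.2.1 * f p.1 p.2.2 * f p.2.1 p.2.2 with hGdef
  set Gs : ℝ × ℝ × ℝ → ℝ :=
    fun p => K (p.1 + p.2.1) p.2.1 * f (p.1 + p.2.1) p.2.2 * f p.2.1 p.2.2 with hGsdef
  -- the associativity equivalence and the two transformations on `(ℝ × ℝ) × ℝ`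
  set a : (ℝ × ℝ) × ℝ ≃ᵐ ℝ × ℝ × ℝ := MeasurableEquiv.prodAssoc with hadef
  have ha : MeasurePreserving a volume volume := by
    simp only [Measure.volume_eq_prod]
    exact measurePreserving_prodAssoc volume volume volume
  set eY : (ℝ × ℝ) × ℝ ≃ᵐ (ℝ × ℝ) × ℝ := shearE.prodCongr (MeasurableEquiv.refl ℝ) with heYdef
  have heY : MeasurePreserving eY volume volume := by
    simp only [Measure.volume_eq_prod]
    exact shearE_mp.prod (MeasurePreserving.id volume)
  set wY : (ℝ × ℝ) × ℝ ≃ᵐ (ℝ × ℝ) × ℝ :=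
    (MeasurableEquiv.prodComm : ℝ × ℝ ≃ᵐ ℝ × ℝ).prodCongr (MeasurableEquiv.refl ℝ) with hwYdef
  have hwY : MeasurePreserving wY volume volume := by
    simp only [Measure.volume_eq_prod]
    exact Measure.measurePreserving_swap.prod (MeasurePreserving.id volume)
  -- preimage computations
  have hpreQ : a ⁻¹' (Ioi 0 ×ˢ Ioi 0 ×ˢ Ioc 0 τ) = (Ioi 0 ×ˢ Ioi 0) ×ˢ Ioc 0 τ := by
    ext ⟨⟨ς, ϱ⟩, s⟩
    simp [hadef, MeasurableEquiv.prodAssoc, Equiv.prodAssoc, Set.mem_prod, and_assoc]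
  have hpreQ' : a.symm ⁻¹' ((Ioi 0 ×ˢ Ioi 0) ×ˢ Ioc 0 τ) = Ioi 0 ×ˢ Ioi 0 ×ˢ Ioc 0 τ := by
    ext ⟨ς, ϱ, s⟩
    simp [hadef, MeasurableEquiv.prodAssoc, Equiv.prodAssoc, Set.mem_prod, and_assoc]
  have hpreD : eY ⁻¹' (T2 ×ˢ Ioc 0 τ) = (Ioi 0 ×ˢ Ioi 0) ×ˢ Ioc 0 τ := by
    ext ⟨⟨ς, ϱ⟩, s⟩
    simp only [Set.mem_preimage, Set.mem_prod, heYdef, MeasurableEquiv.prodCongr,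
      MeasurableEquiv.coe_mk, Equiv.prodCongr_apply, Equiv.coe_refl, Prod.map_apply, id_eq,
      shearE, T2, Set.mem_setOf_eq, Set.mem_Ioi, Equiv.coe_fn_mk, MeasurableEquiv.refl,
      Equiv.refl_apply]
    constructor
    · rintro ⟨⟨h1, h2⟩, h3⟩; exact ⟨⟨by linarith, h1⟩, h3⟩
    · rintro ⟨⟨h1, h2⟩, h3⟩; exact ⟨⟨h2, by linarith⟩, h3⟩
  have hpreD' : wY ⁻¹' (T2 ×ˢ Ioc 0 τ) = T2' ×ˢ Ioc 0 τ := by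
    ext ⟨⟨ς, ϱ⟩, s⟩
    simp only [Set.mem_preimage, Set.mem_prod, hwYdef, MeasurableEquiv.prodCongr,
      MeasurableEquiv.coe_mk, Equiv.prodCongr_apply, Equiv.coe_refl, Prod.map_apply, id_eq,
      MeasurableEquiv.prodComm, Equiv.prodComm, T2, T2', Set.mem_setOf_eq, Equiv.coe_fn_mk,
      MeasurableEquiv.refl, Equiv.refl_apply]
    tauto
  -- integrability of `G` on the quadrant up to time `τ`
  have hGQτ : IntegrableOn G (Ioi 0 ×ˢ Ioi 0 ×ˢ Ioc 0 τ) := by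
    have hnull : (volume : Measure (ℝ × ℝ × ℝ))
        ((univ : Set ℝ) ×ˢ (univ : Set ℝ) ×ˢ ({T} : Set ℝ)) = 0 := by
      rw [Measure.volume_eq_prod, Measure.prod_prod, Measure.volume_eq_prod, Measure.prod_prod]
      simp
    have h0 : IntegrableOn G ((univ : Set ℝ) ×ˢ (univ : Set ℝ) ×ˢ ({T} : Set ℝ)) := by
      rw [IntegrableOn, Measure.restrict_eq_zero.mpr hnull]
      exact integrable_zero_measure
    refine (hint.union h0).mono_set ?_
    rintro ⟨ς, ϱ, s⟩ ⟨h1, h2, h3⟩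
    by_cases hs : s < T
    · exact Or.inl ⟨h1, h2, h3.1, hs⟩
    · exact Or.inr ⟨trivial, trivial, by
        simpa using le_antisymm (h3.2.trans hτT) (not_lt.mp hs)⟩
  -- transfers of integrability
  have hGaQ : IntegrableOn (fun p => G (a p)) ((Ioi 0 ×ˢ Ioi 0) ×ˢ Ioc 0 τ) := by
    have h := transferIOn a ha hGQτ
    rwa [hpreQ] at h
  have hT2sub : T2 ⊆ Ioi (0:ℝ) ×ˢ Ioi (0:ℝ) := by
    rintro ⟨ς, ϱ⟩ ⟨h1, h2⟩; exact ⟨lt_trans h1 h2, h1⟩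
  have hT2'sub : T2' ⊆ Ioi (0:ℝ) ×ˢ Ioi (0:ℝ) := by
    rintro ⟨ς, ϱ⟩ ⟨h1, h2⟩; exact ⟨h1, lt_trans h1 h2⟩
  have hGaD : IntegrableOn (fun p => G (a p)) (T2 ×ˢ Ioc 0 τ) :=
    hGaQ.mono_set (Set.prod_mono hT2sub subset_rfl)
  have hGaD' : IntegrableOn (fun p => G (a p)) (T2' ×ˢ Ioc 0 τ) :=
    hGaQ.mono_set (Set.prod_mono hT2'sub subset_rfl)
  have hGsQ : IntegrableOn Gs (Ioi 0 ×ˢ Ioi 0 ×ˢ Ioc 0 τ) := by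
    have h1 : IntegrableOn (fun x => G (a (eY x))) ((Ioi 0 ×ˢ Ioi 0) ×ˢ Ioc 0 τ) := by
      have h := transferIOn eY heY hGaD
      rwa [hpreD] at h
    have h2 := transferIOn a.symm (ha.symm a) h1
    rw [hpreQ'] at h2
    exact h2.congr (ae_of_all _ fun p => by rfl)
  -- bounded multiplication helper
  have hbdd1 : ∃ C', ∀ x : (ℝ × ℝ) × ℝ, ‖φ x.1.1‖ ≤ C' :=
    ⟨C, fun x => by simpa [Real.norm_eq_abs] using hC x.1.1⟩
  have hbdd2 : ∃ C', ∀ x : (ℝ × ℝ) × ℝ, ‖φ x.1.2‖ ≤ C' :=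
    ⟨C, fun x => by simpa [Real.norm_eq_abs] using hC x.1.2⟩
  have hbdd3 : ∃ C', ∀ x : (ℝ × ℝ) × ℝ, ‖φ (x.1.1 - x.1.2)‖ ≤ C' :=
    ⟨C, fun x => by simpa [Real.norm_eq_abs] using hC (x.1.1 - x.1.2)⟩
  have hm1 : AEStronglyMeasurable (fun x : (ℝ × ℝ) × ℝ => φ x.1.1)
      (volume.restrict (T2 ×ˢ Ioc 0 τ)) :=
    (hφm.comp measurable_fst.fst).aestronglyMeasurable
  have hm1' : AEStronglyMeasurable (fun x : (ℝ × ℝ) × ℝ => φ x.1.1)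
      (volume.restrict (T2' ×ˢ Ioc 0 τ)) :=
    (hφm.comp measurable_fst.fst).aestronglyMeasurable
  have hm2 : AEStronglyMeasurable (fun x : (ℝ × ℝ) × ℝ => φ x.1.2)
      (volume.restrict (T2 ×ˢ Ioc 0 τ)) :=
    (hφm.comp measurable_fst.snd).aestronglyMeasurable
  have hm3 : AEStronglyMeasurable (fun x : (ℝ × ℝ) × ℝ => φ (x.1.1 - x.1.2))
      (volume.restrict (T2 ×ˢ Ioc 0 τ)) :=
    (hφm.comp (measurable_fst.fst.sub measurable_fst.snd)).aestronglyMeasurable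
  have hIa : IntegrableOn (fun p : (ℝ × ℝ) × ℝ => φ (p.1.1 - p.1.2) * G (a p))
      (T2 ×ˢ Ioc 0 τ) := hGaD.bdd_mul hm3 (ae_of_all _ hbdd3.choose_spec)
  have hIb : IntegrableOn (fun p : (ℝ × ℝ) × ℝ => φ p.1.1 * G (a p))
      (T2 ×ˢ Ioc 0 τ) := hGaD.bdd_mul hm1 (ae_of_all _ hbdd1.choose_spec)
  have hIc : IntegrableOn (fun p : (ℝ × ℝ) × ℝ => φ p.1.2 * G (a p))
      (T2 ×ˢ Ioc 0 τ) := hGaD.bdd_mul hm2 (ae_of_all _ hbdd2.choose_spec)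
  have hIb' : IntegrableOn (fun p : (ℝ × ℝ) × ℝ => φ p.1.1 * G (a p))
      (T2' ×ˢ Ioc 0 τ) := hGaD'.bdd_mul hm1' (ae_of_all _ hbdd1.choose_spec)
  -- the gain term : change of variables via the shear
  have hgain : (∫ p in T2 ×ˢ Ioc 0 τ, φ (p.1.1 - p.1.2) * G (a p))
      = ∫ p in (Ioi 0 ×ˢ Ioi 0) ×ˢ Ioc 0 τ, φ p.1.1 * G (a (eY p)) := by
    have h := heY.setIntegral_preimage_emb eY.measurableEmbedding
      (fun p : (ℝ × ℝ) × ℝ => φ (p.1.1 - p.1.2) * G (a p)) (T2 ×ˢ Ioc 0 τ)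
    rw [hpreD] at h
    rw [← h]
    refine integral_congr_ae (Filter.Eventually.of_forall fun x => ?_)
    show φ (x.1.1 + x.1.2 - x.1.2) * G (a (eY x)) = φ x.1.1 * G (a (eY x))
    rw [add_sub_cancel_right]
  -- the second loss term : symmetry swap
  have hloss : (∫ p in T2 ×ˢ Ioc 0 τ, φ p.1.2 * G (a p))
      = ∫ p in T2' ×ˢ Ioc 0 τ, φ p.1.1 * G (a p) := by
    have h := hwY.setIntegral_preimage_emb wY.measurableEmbedding
      (fun p : (ℝ × ℝ) × ℝ => φ p.1.2 * G (a p)) (T2 ×ˢ Ioc 0 τ)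
    rw [hpreD'] at h
    rw [← h]
    refine integral_congr_ae (Filter.Eventually.of_forall fun x => ?_)
    show φ ((wY x).1.2) * G (a (wY x)) = φ x.1.1 * G (a x)
    have h1 : (wY x).1.2 = x.1.1 := rfl
    have h2 : G (a (wY x)) = K x.1.2 x.1.1 * f x.1.2 x.2 * f x.1.1 x.2 := rfl
    have h3 : G (a x) = K x.1.1 x.1.2 * f x.1.1 x.2 * f x.1.2 x.2 := rfl
    rw [h1, h2, h3, hKsym x.1.2 x.1.1]; ring
  -- joining the two triangles into the quadrant
  have hunion : (∫ p in T2 ×ˢ Ioc 0 τ, φ p.1.1 * G (a p))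
        + (∫ p in T2' ×ˢ Ioc 0 τ, φ p.1.1 * G (a p))
      = ∫ p in (Ioi 0 ×ˢ Ioi 0) ×ˢ Ioc 0 τ, φ p.1.1 * G (a p) := by
    have hdisj : Disjoint (T2 ×ˢ Ioc 0 τ) (T2' ×ˢ Ioc 0 τ) := by
      rw [Set.disjoint_left]
      rintro ⟨⟨ς, ϱ⟩, s⟩ ⟨⟨h1, h2⟩, -⟩ ⟨⟨h3, h4⟩, -⟩
      exact absurd h4 (not_lt.mpr h2.le)
    rw [← setIntegral_union hdisj (T2'_meas.prod measurableSet_Ioc) hIb hIb', ← Set.union_prod]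
    apply setIntegral_congr_set
    rw [ae_eq_set]
    constructor
    · rw [Set.diff_eq_empty.mpr (Set.prod_mono (Set.union_subset hT2sub hT2'sub) subset_rfl)]
      exact measure_empty
    · have hdiag : (volume : Measure (ℝ × ℝ)) {q : ℝ × ℝ | q.1 = q.2} = 0 := by
        rw [Measure.volume_eq_prod,
          Measure.measure_prod_null (measurableSet_eq_fun measurable_fst measurable_snd)]
        refine Filter.Eventually.of_forall fun x => ?_
        have hx : (Prod.mk x ⁻¹' {q : ℝ × ℝ | q.1 = q.2}) = {x} := by
          ext y; simp [eq_comm]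
        simp [hx]
      refine measure_mono_null (fun p hp => ?_)
        (show (volume : Measure ((ℝ × ℝ) × ℝ))
            ({q : ℝ × ℝ | q.1 = q.2} ×ˢ (univ : Set ℝ)) = 0 from by
          rw [Measure.volume_eq_prod, Measure.prod_prod, hdiag, zero_mul])
      obtain ⟨⟨⟨h1, h2⟩, h3⟩, h4⟩ := hp
      refine ⟨?_, trivial⟩
      by_contra hne
      rcases lt_or_gt_of_ne hne with hlt | hgt
      · exact h4 ⟨Or.inr ⟨h1, hlt⟩, h3⟩
      · exact h4 ⟨Or.inl ⟨h2, hgt⟩, h3⟩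
  -- splitting the weight
  have hsplit : (∫ p in T2 ×ˢ Ioc 0 τ, (φ (p.1.1 - p.1.2) - φ p.1.1 - φ p.1.2) * G (a p))
      = (∫ p in T2 ×ˢ Ioc 0 τ, φ (p.1.1 - p.1.2) * G (a p))
        - (∫ p in T2 ×ˢ Ioc 0 τ, φ p.1.1 * G (a p))
        - ∫ p in T2 ×ˢ Ioc 0 τ, φ p.1.2 * G (a p) := by
    have h12 : Integrable
        (fun p : (ℝ × ℝ) × ℝ => φ (p.1.1 - p.1.2) * G (a p) - φ p.1.1 * G (a p))
        (volume.restrict (T2 ×ˢ Ioc 0 τ)) := hIa.sub hIb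
    simp_rw [sub_mul]
    rw [integral_sub h12 hIc, integral_sub hIa hIb]
  have hstar : (∫ p in T2 ×ˢ Ioc 0 τ, (φ (p.1.1 - p.1.2) - φ p.1.1 - φ p.1.2) * G (a p))
      = (∫ p in (Ioi 0 ×ˢ Ioi 0) ×ˢ Ioc 0 τ, φ p.1.1 * G (a (eY p)))
        - ∫ p in (Ioi 0 ×ˢ Ioi 0) ×ˢ Ioc 0 τ, φ p.1.1 * G (a p) := by
    rw [hsplit, hgain, hloss, ← hunion]; ring
  -- the left-hand side equals the triangle integral
  have hFD : IntegrableOn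
      (fun p : (ℝ × ℝ) × ℝ => (φ (p.1.1 - p.1.2) - φ p.1.1 - φ p.1.2) * G (a p))
      (T2 ×ˢ Ioc 0 τ) := by
    simp_rw [sub_mul]
    exact (hIa.sub hIb).sub hIc
  have hLHS : (∫ s in Ioc (0:ℝ) τ, ∫ ς in Ioi (0:ℝ), ∫ ϱ in Ioo 0 ς,
        (φ (ς - ϱ) - φ ς - φ ϱ) * (K ς ϱ * f ς s * f ϱ s))
      = ∫ p in T2 ×ˢ Ioc 0 τ, (φ (p.1.1 - p.1.2) - φ p.1.1 - φ p.1.2) * G (a p) := by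
    rw [setIntegral_prod_symm_vol _ hFD]
    apply integral_congr_ae
    have hFD' : Integrable
        (fun p : (ℝ × ℝ) × ℝ => (φ (p.1.1 - p.1.2) - φ p.1.1 - φ p.1.2) * G (a p))
        (((volume : Measure (ℝ × ℝ)).restrict T2).prod
          ((volume : Measure ℝ).restrict (Ioc 0 τ))) := by
      rwa [Measure.prod_restrict, ← Measure.volume_eq_prod]
    filter_upwards [hFD'.prod_left_ae] with s hs
    exact (triangle_unfold
      (fun q : ℝ × ℝ => (φ (q.1 - q.2) - φ q.1 - φ q.2) * G (a (q, s))) hs).symm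
  -- transfers to the natural coordinates
  have htrans1 : (∫ p in (Ioi 0 ×ˢ Ioi 0) ×ˢ Ioc 0 τ, φ p.1.1 * G (a p))
      = ∫ p in Ioi 0 ×ˢ Ioi 0 ×ˢ Ioc 0 τ, φ p.1 * G p := by
    have h := ha.setIntegral_preimage_emb a.measurableEmbedding
      (fun p : ℝ × ℝ × ℝ => φ p.1 * G p) (Ioi 0 ×ˢ Ioi 0 ×ˢ Ioc 0 τ)
    rw [hpreQ] at h
    rw [← h]
    rfl
  have htrans2 : (∫ p in (Ioi 0 ×ˢ Ioi 0) ×ˢ Ioc 0 τ, φ p.1.1 * G (a (eY p)))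
      = ∫ p in Ioi 0 ×ˢ Ioi 0 ×ˢ Ioc 0 τ, φ p.1 * Gs p := by
    have h := ha.setIntegral_preimage_emb a.measurableEmbedding
      (fun p : ℝ × ℝ × ℝ => φ p.1 * Gs p) (Ioi 0 ×ˢ Ioi 0 ×ˢ Ioc 0 τ)
    rw [hpreQ] at h
    rw [← h]
    rfl
  obtain ⟨hA, hIA⟩ := rhs_unfold τ Gs φ hφm ⟨C, hC⟩ hGsQ
  obtain ⟨hB, hIB⟩ := rhs_unfold τ G φ hφm ⟨C, hC⟩ hGQτ
  calc (∫ s in Ioc (0:ℝ) τ, ∫ ς in Ioi (0:ℝ), ∫ ϱ in Ioo 0 ς,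
        (φ (ς - ϱ) - φ ς - φ ϱ) * (K ς ϱ * f ς s * f ϱ s))
      = ∫ p in T2 ×ˢ Ioc 0 τ, (φ (p.1.1 - p.1.2) - φ p.1.1 - φ p.1.2) * G (a p) := hLHS
    _ = (∫ p in (Ioi 0 ×ˢ Ioi 0) ×ˢ Ioc 0 τ, φ p.1.1 * G (a (eY p)))
        - ∫ p in (Ioi 0 ×ˢ Ioi 0) ×ˢ Ioc 0 τ, φ p.1.1 * G (a p) := hstar
    _ = (∫ p in Ioi 0 ×ˢ Ioi 0 ×ˢ Ioc 0 τ, φ p.1 * Gs p)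
        - ∫ p in Ioi 0 ×ˢ Ioi 0 ×ˢ Ioc 0 τ, φ p.1 * G p := by rw [htrans1, htrans2]
    _ = (∫ ς in Ioi (0:ℝ), φ ς * ∫ s in Ioc (0:ℝ) τ, ∫ ϱ in Ioi (0:ℝ), Gs (ς, ϱ, s))
        - ∫ ς in Ioi (0:ℝ), φ ς * ∫ s in Ioc (0:ℝ) τ, ∫ ϱ in Ioi (0:ℝ), G (ς, ϱ, s) := by
          rw [hA, hB]
    _ = ∫ ς in Ioi (0:ℝ),
          (φ ς * (∫ s in Ioc (0:ℝ) τ, ∫ ϱ in Ioi (0:ℝ), Gs (ς, ϱ, s))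
            - φ ς * ∫ s in Ioc (0:ℝ) τ, ∫ ϱ in Ioi (0:ℝ), G (ς, ϱ, s)) :=
        (integral_sub hIA hIB).symm
    _ = ∫ ς in Ioi (0:ℝ), φ ς *
          ((∫ s in Ioc (0:ℝ) τ, ∫ ϱ in Ioi (0:ℝ), Gs (ς, ϱ, s))
            - ∫ s in Ioc (0:ℝ) τ, ∫ ϱ in Ioi (0:ℝ), G (ς, ϱ, s)) := by
        simp_rw [mul_sub]
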